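/- arXiv:2204.09107 — 5 statements merged into one kernel-verified Lean document; each statement's English description precedes it below -/
import Mathlib

section
/- Let 0 < β < α ≤ 1 and let G be an n-vertex α-expander. Then for every non-empty set X ⊆ V(G) with |X| ≤ ((α−β)²/(4(α−β)+2))·n, there exists a set Y ⊆ V(G)\X with |Y| < |X|/(α−β) such that the induced subgraph G − (X ∪ Y) is a β-expander. -/
open Finset

variable {V : Type*}

/-- The external neighborhood of a vertex set `X` in a graph `G`:
vertices outside `X` with a neighbor in `X`. -/
noncomputable def extNbhd [Fintype V] (G : SimpleGraph V) (X : Finset V) : Finset V :=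
  @Finset.filter V (fun v => v ∉ X ∧ ∃ u ∈ X, G.Adj u v) (Classical.decPred _) Finset.univ

/-- An `n`-vertex graph is an `α`-expander if every vertex set of size at most `n/2`
has external neighborhood of size at least `α` times its size. -/
def IsExpander [Fintype V] (G : SimpleGraph V) (α : ℝ) : Prop :=
  ∀ X : Finset V, (X.card : ℝ) ≤ (Fintype.card V : ℝ) / 2 →
    α * (X.card : ℝ) ≤ ((extNbhd G X).card : ℝ)

/-- Expansion of the induced subgraph of `G` on the vertex set `W`:
every `U ⊆ W` of size at most `|W|/2` has external neighborhood (inside `W`) of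
size at least `β|U|`. -/
def IsExpanderOn [Fintype V] [DecidableEq V] (G : SimpleGraph V) (W : Finset V) (β : ℝ) : Prop :=
  ∀ U : Finset V, U ⊆ W → (U.card : ℝ) ≤ (W.card : ℝ) / 2 →
    β * (U.card : ℝ) ≤ (((extNbhd G U) ∩ W).card : ℝ)

lemma mem_extNbhd' [Fintype V] {G : SimpleGraph V} {X : Finset V} {v : V} :
    v ∈ extNbhd G X ↔ v ∉ X ∧ ∃ u ∈ X, G.Adj u v := by
  simp [extNbhd]

lemma arith (A B n x yo u c m T : ℝ) (hB : 0 < B) (hBA : B < A) (hA : A ≤ 1)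
    (hx : 1 ≤ x) (hX : x * (4*(A-B)+2) ≤ (A-B)^2 * n)
    (hyob : (A-B)*yo < x)
    (hu : u ≤ (n - x - yo)/2) (hc : c = yo + u)
    (hm : n - 1 ≤ 2*m)
    (hT : T < B * c)
    (hmain : A*m ≤ (c - m) + x + T) : False := by
  have hg : 0 < A - B := by linarith
  have k2 : 2*c ≤ n - x + yo := by linarith
  have k7 : (1+A)*(n-1) < 2*((1+B)*c + x) := by
    nlinarith [mul_le_mul_of_nonneg_left hm (by linarith : (0:ℝ) ≤ 1+A)]
  have k3 : (A-B)*(1+B)*(2*c) ≤ (A-B)*(1+B)*(n - x + yo) :=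
    mul_le_mul_of_nonneg_left k2 (by nlinarith)
  have k4 : (1+B)*((A-B)*yo) < (1+B)*x :=
    mul_lt_mul_of_pos_left hyob (by linarith)
  have k9 : (A-B)*(1+B)*(2*c) < (A-B)*(1+B)*(n-x) + (1+B)*x := by nlinarith
  have k8 := mul_lt_mul_of_pos_left k7 hg
  nlinarith [k8, k9, hX,
    mul_nonneg (mul_nonneg (by linarith : (0:ℝ) ≤ 1-B)
      (by linarith : (0:ℝ) ≤ 1-(A-B))) (by linarith : (0:ℝ) ≤ x),
    mul_nonneg (le_of_lt hg) (by linarith : (0:ℝ) ≤ x - 1)]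

lemma key [Fintype V] [DecidableEq V] (G : SimpleGraph V) (α β : ℝ)
    (hβ : 0 < β) (hβα : β < α) (hα : α ≤ 1) (hG : IsExpander G α)
    (X : Finset V) (hx1 : (1:ℝ) ≤ X.card)
    (hXc : (X.card : ℝ) * (4*(α-β)+2) ≤ (α-β)^2 * (Fintype.card V : ℝ)) :
    ∀ k : ℕ, ∀ Y : Finset V, ((X ∪ Y)ᶜ).card ≤ k → Disjoint Y X →
      (Y = ∅ ∨ ((extNbhd G Y \ X).card : ℝ) < β * Y.card) →
      (α - β) * Y.card < (X.card : ℝ) →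
      ∃ Y' : Finset V, Disjoint Y' X ∧ (α - β) * Y'.card < (X.card : ℝ) ∧
        IsExpanderOn G ((X ∪ Y')ᶜ) β := by
  have hg : 0 < α - β := by linarith
  intro k
  induction k with
  | zero =>
    intro Y hk hdisj _ hbnd
    by_cases hE : IsExpanderOn G ((X ∪ Y)ᶜ) β
    · exact ⟨Y, hdisj, hbnd, hE⟩
    · exfalso
      unfold IsExpanderOn at hE
      push_neg at hE
      obtain ⟨U, hUW, _, hUlt⟩ := hE
      have hU0 : 0 < U.card := by
        rcases Nat.eq_zero_or_pos U.card with h | h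
        · exfalso
          rw [h] at hUlt
          push_cast at hUlt
          have h0 : (0:ℝ) ≤ ((extNbhd G U ∩ (X ∪ Y)ᶜ).card : ℝ) := by positivity
          linarith
        · exact h
      have : U.card ≤ ((X ∪ Y)ᶜ).card := card_le_card hUW
      omega
  | succ k ih =>
    intro Y hk hdisj hinv hbnd
    by_cases hE : IsExpanderOn G ((X ∪ Y)ᶜ) β
    · exact ⟨Y, hdisj, hbnd, hE⟩
    unfold IsExpanderOn at hE
    push_neg at hE
    obtain ⟨U, hUW, hUhalf, hUlt⟩ := hE
    -- U is nonempty
    have hU0 : 0 < U.card := by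
      rcases Nat.eq_zero_or_pos U.card with h | h
      · exfalso
        rw [h] at hUlt
        push_cast at hUlt
        have h0 : (0:ℝ) ≤ ((extNbhd G U ∩ (X ∪ Y)ᶜ).card : ℝ) := by positivity
        linarith
      · exact h
    -- disjointness facts
    have hUX : ∀ v ∈ U, v ∉ X ∧ v ∉ Y := by
      intro v hv
      have := hUW hv
      simp only [mem_compl, mem_union] at this
      tauto
    have hdisjYU : Disjoint Y U := by
      rw [disjoint_right]; intro v hv; exact (hUX v hv).2
    have hdisjUX : Disjoint U X := by
      rw [disjoint_left]; intro v hv; exact (hUX v hv).1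
    have hdisjnew : Disjoint (Y ∪ U) X := by
      rw [disjoint_union_left]; exact ⟨hdisj, hdisjUX⟩
    -- cardinality of new union
    have hcardYU : ((Y ∪ U).card : ℝ) = (Y.card : ℝ) + U.card := by
      rw [card_union_of_disjoint hdisjYU]; push_cast; ring
    -- the new invariant
    have hsub : extNbhd G (Y ∪ U) \ X ⊆
        (extNbhd G Y \ X) ∪ (extNbhd G U ∩ (X ∪ Y)ᶜ) := by
      intro v hv
      simp only [mem_sdiff, mem_extNbhd', mem_union, mem_inter, mem_compl] at hv ⊢
      obtain ⟨⟨hvYU, u, hu, hadj⟩, hvX⟩ := hv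
      push_neg at hvYU
      rcases hu with hu | hu
      · exact Or.inl ⟨⟨hvYU.1, u, hu, hadj⟩, hvX⟩
      · exact Or.inr ⟨⟨hvYU.2, u, hu, hadj⟩, by push_neg; exact ⟨hvX, hvYU.1⟩⟩
    have hTold : ((extNbhd G Y \ X).card : ℝ) ≤ β * Y.card := by
      rcases hinv with h | h
      · subst h
        have : extNbhd G (∅ : Finset V) = ∅ := by
          ext v; simp [mem_extNbhd']
        simp [this]
      · exact le_of_lt h
    have hTnew : ((extNbhd G (Y ∪ U) \ X).card : ℝ) < β * (Y ∪ U).card := by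
      have h1 : ((extNbhd G (Y ∪ U) \ X).card : ℝ) ≤
          ((extNbhd G Y \ X).card : ℝ) + ((extNbhd G U ∩ (X ∪ Y)ᶜ).card : ℝ) := by
        have := (card_le_card hsub).trans (card_union_le _ _)
        exact_mod_cast this
      rw [hcardYU]
      nlinarith [hUlt]
    -- card of W in ℝ
    have hWcard : (((X ∪ Y)ᶜ).card : ℝ) =
        (Fintype.card V : ℝ) - X.card - Y.card := by
      rw [card_compl, Nat.cast_sub (card_le_univ _), card_union_of_disjoint hdisj.symm]
      push_cast; ring
    -- the new size bound
    have hbndnew : (α - β) * ((Y ∪ U).card : ℝ) < X.card := by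
      by_cases hhalf : ((Y ∪ U).card : ℝ) ≤ (Fintype.card V : ℝ) / 2
      · -- apply expansion to Y ∪ U directly
        have hexp := hG (Y ∪ U) hhalf
        have hsub2 : extNbhd G (Y ∪ U) ⊆ X ∪ (extNbhd G (Y ∪ U) \ X) := by
          intro v hv
          simp only [mem_union, mem_sdiff]
          by_cases h : v ∈ X
          · exact Or.inl h
          · exact Or.inr ⟨hv, h⟩
        have h2 : ((extNbhd G (Y ∪ U)).card : ℝ) ≤
            (X.card : ℝ) + ((extNbhd G (Y ∪ U) \ X).card : ℝ) := by
          have := (card_le_card hsub2).trans (card_union_le _ _)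
          exact_mod_cast this
        nlinarith [hexp, h2, hTnew]
      · -- |Y ∪ U| > n/2 : contradiction
        exfalso
        push_neg at hhalf
        have hmle : ((Fintype.card V / 2 : ℕ) : ℝ) ≤ (Fintype.card V : ℝ) / 2 :=
          Nat.cast_div_le
        have hmcard : Fintype.card V / 2 ≤ (Y ∪ U).card := by
          have : ((Fintype.card V / 2 : ℕ) : ℝ) ≤ ((Y ∪ U).card : ℝ) :=
            hmle.trans hhalf.le
          exact_mod_cast this
        obtain ⟨Y', hY'sub, hY'card⟩ := exists_subset_card_eq hmcard
        have hexp := hG Y' (by rw [hY'card]; exact hmle)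
        have hsub3 : extNbhd G Y' ⊆ ((Y ∪ U) \ Y') ∪ X ∪ (extNbhd G (Y ∪ U) \ X) := by
          intro v hv
          simp only [mem_extNbhd'] at hv
          obtain ⟨hvY', u, hu, hadj⟩ := hv
          by_cases h1 : v ∈ Y ∪ U
          · exact mem_union_left _ (mem_union_left _ (mem_sdiff.2 ⟨h1, hvY'⟩))
          by_cases h2 : v ∈ X
          · exact mem_union_left _ (mem_union_right _ h2)
          exact mem_union_right _ (mem_sdiff.2 ⟨mem_extNbhd'.2 ⟨h1, u, hY'sub hu, hadj⟩, h2⟩)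
        have hc3 : ((extNbhd G Y').card : ℝ) ≤
            (((Y ∪ U) \ Y').card : ℝ) + (X.card : ℝ) + ((extNbhd G (Y ∪ U) \ X).card : ℝ) := by
          have hA := card_le_card hsub3
          have hB := card_union_le (((Y ∪ U) \ Y') ∪ X) (extNbhd G (Y ∪ U) \ X)
          have hC := card_union_le ((Y ∪ U) \ Y') X
          have : (extNbhd G Y').card ≤
              ((Y ∪ U) \ Y').card + X.card + (extNbhd G (Y ∪ U) \ X).card := by omega
          exact_mod_cast this
        have hcsd : (((Y ∪ U) \ Y').card : ℝ) = ((Y ∪ U).card : ℝ) - Y'.card := by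
          rw [card_sdiff_of_subset hY'sub, Nat.cast_sub (card_le_card hY'sub)]
        have hmlb : (Fintype.card V : ℝ) - 1 ≤ 2 * ((Fintype.card V / 2 : ℕ) : ℝ) := by
          have h1 : Fintype.card V ≤ 2 * (Fintype.card V / 2) + 1 := by omega
          have h2 : (Fintype.card V : ℝ) ≤ 2 * ((Fintype.card V / 2 : ℕ) : ℝ) + 1 := by
            exact_mod_cast h1
          linarith
        have hureal : (U.card : ℝ) ≤ ((Fintype.card V : ℝ) - X.card - Y.card) / 2 := by
          rw [← hWcard]; exact hUhalf
        refine arith α β (Fintype.card V) X.card Y.card U.card ((Y ∪ U).card)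
          ((Fintype.card V / 2 : ℕ) : ℝ) ((extNbhd G (Y ∪ U) \ X).card)
          hβ hβα hα hx1 hXc hbnd hureal hcardYU hmlb hTnew ?_
        rw [hY'card] at hexp
        rw [hY'card] at hcsd
        linarith [hexp, hc3, hcsd]
    -- new complement is strictly smaller
    have hknew : ((X ∪ (Y ∪ U))ᶜ).card ≤ k := by
      have hss : (X ∪ (Y ∪ U))ᶜ ⊂ (X ∪ Y)ᶜ := by
        obtain ⟨u0, hu0⟩ := card_pos.mp hU0
        refine (Finset.ssubset_iff_of_subset (compl_subset_compl.2
          (union_subset_union_right subset_union_left))).2 ?_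
        refine ⟨u0, hUW hu0, ?_⟩
        simp only [mem_compl, not_not]
        exact mem_union_right _ (mem_union_right _ hu0)
      have := card_lt_card hss
      omega
    exact ih (Y ∪ U) hknew hdisjnew (Or.inr hTnew) hbndnew

/-- The removal lemma: deleting a small set X from an α-expander, one can delete a further
set Y of size < |X|/(α-β) so that the remaining induced subgraph is a β-expander. -/
theorem stmt1 [Fintype V] [DecidableEq V] (G : SimpleGraph V) (α β : ℝ)
    (hβ : 0 < β) (hβα : β < α) (hα : α ≤ 1) (hG : IsExpander G α)
    (X : Finset V) (hX : X.Nonempty)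
    (hXcard : (X.card : ℝ) ≤ (α - β) ^ 2 / (4 * (α - β) + 2) * (Fintype.card V : ℝ)) :
    ∃ Y : Finset V, Disjoint Y X ∧ (Y.card : ℝ) < (X.card : ℝ) / (α - β) ∧
      IsExpanderOn G ((X ∪ Y)ᶜ) β := by
  have hg : 0 < α - β := by linarith
  have hx1 : (1:ℝ) ≤ X.card := by exact_mod_cast card_pos.2 hX
  have hden : (0:ℝ) < 4 * (α - β) + 2 := by linarith
  have hXc : (X.card : ℝ) * (4*(α-β)+2) ≤ (α-β)^2 * (Fintype.card V : ℝ) := by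
    rw [div_mul_eq_mul_div] at hXcard
    calc (X.card : ℝ) * (4*(α-β)+2) ≤ ((α-β)^2 * (Fintype.card V : ℝ) / (4*(α-β)+2)) * (4*(α-β)+2) := by
          exact mul_le_mul_of_nonneg_right hXcard hden.le
      _ = (α-β)^2 * (Fintype.card V : ℝ) := by field_simp
  obtain ⟨Y, h1, h2, h3⟩ := key G α β hβ hβα hα hG X hx1 hXc ((X ∪ ∅)ᶜ).card ∅
    le_rfl (disjoint_left.2 (by simp)) (Or.inl rfl)
    (by simp only [card_empty, Nat.cast_zero, mul_zero]; linarith)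
  exact ⟨Y, h1, (lt_div_iff₀ hg).2 (by linarith), h3⟩
end

section
/- Let 0 < β < α, let G be an n-vertex α-expander, and let X ⊆ V(G). Suppose Y is a maximum-size element of the collection Z := {Z ⊆ V(G)\X : |N_{G−X}(Z)| < β|Z| and |Z| ≤ n/2}, assumed non-empty. Then |Y| < |X|/(α−β). -/
open Finset

variable {V : Type*}

/-- If Y is a maximum-size subset of V∖X with |N_{G-X}(Y)| < β|Y| and |Y| ≤ n/2,
then |Y| < |X|/(α-β). -/
theorem stmt2 [Fintype V] [DecidableEq V] (G : SimpleGraph V) (α β : ℝ)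
    (hβ : 0 < β) (hβα : β < α) (hG : IsExpander G α) (X Y : Finset V)
    (hYdisj : Disjoint Y X)
    (hYexp : ((extNbhd G Y \ X).card : ℝ) < β * (Y.card : ℝ))
    (hYhalf : (Y.card : ℝ) ≤ (Fintype.card V : ℝ) / 2)
    (hYmax : ∀ Z : Finset V, Disjoint Z X →
      ((extNbhd G Z \ X).card : ℝ) < β * (Z.card : ℝ) →
      (Z.card : ℝ) ≤ (Fintype.card V : ℝ) / 2 → Z.card ≤ Y.card) :
    (Y.card : ℝ) < (X.card : ℝ) / (α - β) := by
  have h1 : α * (Y.card : ℝ) ≤ ((extNbhd G Y).card : ℝ) := hG Y hYhalf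
  have hsub : extNbhd G Y ⊆ (extNbhd G Y \ X) ∪ X := by
    intro v hv
    by_cases hvX : v ∈ X
    · exact mem_union_right _ hvX
    · exact mem_union_left _ (mem_sdiff.mpr ⟨hv, hvX⟩)
  have h2 : ((extNbhd G Y).card : ℝ) ≤ ((extNbhd G Y \ X).card : ℝ) + (X.card : ℝ) := by
    have := (card_le_card hsub).trans (card_union_le _ _)
    exact_mod_cast this
  have h3 : (α - β) * (Y.card : ℝ) < (X.card : ℝ) := by nlinarith
  rw [lt_div_iff₀ (by linarith : (0:ℝ) < α - β)]
  linarith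
end

section
/- Let 0 < β < α, G an n-vertex α-expander, X ⊆ V(G), and let Y ⊆ V(G)\X be a maximum-size set with |N_{G−X}(Y)| < β|Y| and |Y| ≤ n/2. Then for every non-empty U ⊆ V(G)\(X∪Y) with |Y ∪ U| ≤ n/2, we have |N_{G−(X∪Y)}(U)| ≥ β|U|. -/
open Finset

variable {V : Type*}

/-- With Y a maximum-size "bad" set for G-X, every non-empty U ⊆ V∖(X∪Y) with
|Y ∪ U| ≤ n/2 expands in G-(X∪Y) by a factor β. -/
theorem stmt3 [Fintype V] [DecidableEq V] (G : SimpleGraph V) (α β : ℝ)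
    (hβ : 0 < β) (hβα : β < α) (hG : IsExpander G α) (X Y : Finset V)
    (hYdisj : Disjoint Y X)
    (hYexp : ((extNbhd G Y \ X).card : ℝ) < β * (Y.card : ℝ))
    (hYhalf : (Y.card : ℝ) ≤ (Fintype.card V : ℝ) / 2)
    (hYmax : ∀ Z : Finset V, Disjoint Z X →
      ((extNbhd G Z \ X).card : ℝ) < β * (Z.card : ℝ) →
      (Z.card : ℝ) ≤ (Fintype.card V : ℝ) / 2 → Z.card ≤ Y.card)
    (U : Finset V) (hU : U.Nonempty) (hUdisj : Disjoint U (X ∪ Y))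
    (hYU : ((Y ∪ U).card : ℝ) ≤ (Fintype.card V : ℝ) / 2) :
    β * (U.card : ℝ) ≤ ((extNbhd G U \ (X ∪ Y)).card : ℝ) := by
  by_contra hcon
  push_neg at hcon
  have hUY : Disjoint U Y := (Finset.disjoint_union_right.mp hUdisj).2
  have hUX : Disjoint U X := (Finset.disjoint_union_right.mp hUdisj).1
  have hsub : extNbhd G (Y ∪ U) \ X ⊆ (extNbhd G Y \ X) ∪ (extNbhd G U \ (X ∪ Y)) := by
    intro v hv
    simp only [Finset.mem_sdiff, extNbhd, Finset.mem_filter, Finset.mem_univ, true_and,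
      Finset.mem_union] at hv ⊢
    obtain ⟨⟨hvYU, u, hu, hadj⟩, hvX⟩ := hv
    push_neg at hvYU
    rcases hu with hu | hu
    · exact Or.inl ⟨⟨hvYU.1, u, hu, hadj⟩, hvX⟩
    · exact Or.inr ⟨⟨hvYU.2, u, hu, hadj⟩, fun h => h.elim hvX hvYU.1⟩
  have hcard : ((extNbhd G (Y ∪ U) \ X).card : ℝ) <
      β * ((Y ∪ U).card : ℝ) := by
    have h1 : ((extNbhd G (Y ∪ U) \ X).card : ℝ) ≤
        ((extNbhd G Y \ X).card : ℝ) + ((extNbhd G U \ (X ∪ Y)).card : ℝ) := by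
      have := Finset.card_le_card hsub
      have := Finset.card_union_le (extNbhd G Y \ X) (extNbhd G U \ (X ∪ Y))
      push_cast
      exact_mod_cast le_trans (Nat.cast_le.mpr (Finset.card_le_card hsub))
        (by exact_mod_cast this)
    have h2 : ((Y ∪ U).card : ℝ) = (Y.card : ℝ) + (U.card : ℝ) := by
      rw [Finset.card_union_of_disjoint hUY.symm]; push_cast; ring
    rw [h2, mul_add]
    exact lt_of_le_of_lt h1 (add_lt_add_of_lt_of_le hYexp hcon.le)
  have hdisjYU : Disjoint (Y ∪ U) X := Finset.disjoint_union_left.mpr ⟨hYdisj, hUX⟩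
  have hle := hYmax (Y ∪ U) hdisjYU hcard hYU
  have : (Y ∪ U).card = Y.card + U.card := Finset.card_union_of_disjoint hUY.symm
  have hU0 := Finset.card_pos.mpr hU
  omega
end

section
/- Let k be a positive integer and z_1, …, z_m ∈ ℤ_k. For i = 1, …, m+1 define B_i := {Σ_{j ∈ J} z_j : J ⊆ {1, …, i−1}} ⊆ ℤ_k. If for every i ≤ m the element z_i does not lie in the stabilizer of B_i in (ℤ_k, +), then |B_{i}| ≥ i for all i = 1, …, m+1. In particular, if m ≥ k−1 then B_{m+1} has at least k elements if the non-stabilizer condition holds up to step m = k−1, forcing B_k = ℤ_k once |B_i| reaches k. -/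
/-- Subset-sum sets B_i of z_0,…,z_{i-1} in ℤ_k: if at each step i < m the element z_i does
not stabilize B_i, then |B_i| ≥ i + 1 for all i ≤ m; in particular if k ≤ m + 1 then
B_m = ℤ_k. (Here B_0 = {0}, sums over subsets of {0,…,i-1}.) -/
theorem stmt8 (k m : ℕ) [NeZero k] (z : ℕ → ZMod k) (B : ℕ → Finset (ZMod k))
    (hB : ∀ i, B i = (Finset.range i).powerset.image (fun J => ∑ j ∈ J, z j))
    (hstab : ∀ i < m, (B i).image (· + z i) ≠ B i) :
    (∀ i ≤ m, i + 1 ≤ (B i).card) ∧ (k ≤ m + 1 → B m = Finset.univ) := by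
  have hsucc : ∀ i, B (i+1) = B i ∪ (B i).image (· + z i) := by
    intro i
    rw [hB, hB, Finset.range_add_one, Finset.powerset_insert, Finset.image_union,
      Finset.image_image]
    congr 1
    ext x
    simp only [Finset.mem_image, Finset.mem_powerset, Function.comp]
    constructor
    · rintro ⟨J, hJ, rfl⟩
      refine ⟨∑ j ∈ J, z j, ⟨J, hJ, rfl⟩, ?_⟩
      rw [Finset.sum_insert (fun h => Finset.notMem_range_self (hJ h)), add_comm]
    · rintro ⟨y, ⟨J, hJ, rfl⟩, rfl⟩
      exact ⟨J, hJ, by rw [Finset.sum_insert (fun h => Finset.notMem_range_self (hJ h)),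
        add_comm]⟩
  have hcard : ∀ i ≤ m, i + 1 ≤ (B i).card := by
    intro i hi
    induction i with
    | zero =>
      have : (0 : ZMod k) ∈ B 0 := by
        rw [hB]; simp
      simpa using Finset.card_pos.mpr ⟨0, this⟩
    | succ n ih =>
      have hn := ih (Nat.le_of_succ_le hi)
      have hsub : B n ⊆ B (n+1) := by rw [hsucc]; exact Finset.subset_union_left
      rcases lt_or_eq_of_le (Finset.card_le_card hsub) with h | h
      · omega
      · exfalso
        have heq : B (n+1) = B n := (Finset.eq_of_subset_of_card_le hsub h.ge).symm
        apply hstab n (Nat.lt_of_succ_le hi)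
        have himsub : (B n).image (· + z n) ⊆ B n := by
          intro x hx; rw [← heq, hsucc]; exact Finset.mem_union_right _ hx
        refine Finset.eq_of_subset_of_card_le himsub ?_
        exact (Finset.card_image_of_injective (B n) (add_left_injective (z n))).ge
  refine ⟨hcard, fun hk => ?_⟩
  have := hcard m le_rfl
  apply Finset.eq_univ_of_card
  have hle : (B m).card ≤ Fintype.card (ZMod k) := Finset.card_le_univ _
  rw [ZMod.card] at hle ⊢
  omega
end

section
/- Let k be odd, let C be a cycle of length L in a graph, fix a vertex u on C and a direction of traversal, and for each vertex x on C let f(x) ∈ ℤ_k be (ℓ(C[u,x]) − ℓ(C[x,u])) mod k, where C[u,x] and C[x,u] are the two arcs from u to x and from x to u following the orientation. Let Z be a subgroup of ℤ_k of index d > 1. Then the set K := {x ∈ V(C)\{u} : f(x) ∈ Z} has size at most |V(C)|/d + 1. -/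
/-- On a cycle of length L (vertices indexed by position along the cycle, with u at
position 0, so ℓ(C[u,x]) = j and ℓ(C[x,u]) = L - j for the vertex x at position j),
the set of vertices x ≠ u with (ℓ(C[u,x]) - ℓ(C[x,u])) mod k lying in a subgroup
Z ≤ ℤ_k of index d > 1 has size at most L/d + 1, provided k is odd. -/
theorem stmt9 (k L d : ℕ) [NeZero k] (hk : Odd k) (hL : 0 < L)
    (Z : AddSubgroup (ZMod k)) (hd : d * Nat.card Z = k) (hd1 : 1 < d) :
    ((@Finset.filter (Fin L)
        (fun x => ((x.val : ZMod k) - ((L - x.val : ℕ) : ZMod k)) ∈ Z)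
        (Classical.decPred _)
        ((Finset.univ : Finset (Fin L)).erase ⟨0, hL⟩)).card : ℝ)
      ≤ (L : ℝ) / (d : ℝ) + 1 := by
  classical
  set S := (@Finset.filter (Fin L)
        (fun x => ((x.val : ZMod k) - ((L - x.val : ℕ) : ZMod k)) ∈ Z)
        (Classical.decPred _)
        ((Finset.univ : Finset (Fin L)).erase ⟨0, hL⟩)) with hS
  have hd0 : 0 < d := by omega
  have hm0 : 0 < Nat.card Z := Nat.card_pos
  have hdk : d ∣ k := ⟨Nat.card Z, hd.symm⟩
  have hdodd : Odd d := hk.of_dvd_nat hdk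
  haveI : NeZero d := ⟨by omega⟩
  -- for x ∈ Z, d ∣ x.val
  have key : ∀ x : ZMod k, x ∈ Z → d ∣ x.val := by
    intro x hx
    have h2 : Nat.card Z • x = 0 :=
      addOrderOf_dvd_iff_nsmul_eq_zero.mp (Z.addOrderOf_dvd_natCard hx)
    have h3 : ((Nat.card Z * x.val : ℕ) : ZMod k) = 0 := by
      push_cast
      rw [ZMod.natCast_zmod_val]
      simpa [nsmul_eq_mul] using h2
    have h4 : k ∣ Nat.card Z * x.val := (ZMod.natCast_eq_zero_iff _ _).mp h3
    have h5 : Nat.card Z * d ∣ Nat.card Z * x.val := by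
      rw [mul_comm, hd]; exact h4
    exact (Nat.mul_dvd_mul_iff_left hm0).mp h5
  -- 2 is a unit mod d
  have h2u : IsUnit (2 : ZMod d) := by
    have : IsUnit ((2 : ℕ) : ZMod d) := by
      rw [ZMod.isUnit_iff_coprime]
      exact Nat.coprime_two_left.mpr hdodd
    simpa using this
  -- members of S satisfy 2*j ≡ L [mod d]
  have hmem : ∀ j : Fin L, j ∈ S → ((2 : ZMod d) * (j.val : ZMod d)) = (L : ZMod d) := by
    intro j hj
    rw [hS, Finset.mem_filter] at hj
    have hx := key _ hj.2
    set x := ((j.val : ZMod k) - ((L - j.val : ℕ) : ZMod k)) with hxdef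
    have h0 : ((x.val : ℕ) : ZMod d) = 0 := (ZMod.natCast_eq_zero_iff _ _).mpr hx
    have hcast : ((x.val : ℕ) : ZMod d)
        = (j.val : ZMod d) - ((L - j.val : ℕ) : ZMod d) := by
      rw [ZMod.natCast_val, ← ZMod.castHom_apply (h := hdk), hxdef, map_sub,
        map_natCast, map_natCast]
    have hsub : ((L - j.val : ℕ) : ZMod d) = (L : ZMod d) - (j.val : ZMod d) :=
      Nat.cast_sub (le_of_lt j.isLt)
    rw [h0, hsub] at hcast
    linear_combination -hcast
  -- injectivity of j ↦ j/d on S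
  have hinj : Set.InjOn (fun j : Fin L => j.val / d) S := by
    intro a ha b hb hab
    have h2a := hmem a ha
    have h2b := hmem b hb
    have hcancel : (a.val : ZMod d) = (b.val : ZMod d) :=
      h2u.mul_left_cancel (h2a.trans h2b.symm)
    have hmod : a.val % d = b.val % d := (ZMod.natCast_eq_natCast_iff _ _ _).mp hcancel
    have ha2 := Nat.div_add_mod a.val d
    have hb2 := Nat.div_add_mod b.val d
    have hab2 : a.val / d = b.val / d := by simpa using hab
    exact Fin.ext (by rw [← ha2, ← hb2, hab2, hmod])
  have hcard : S.card ≤ L / d + 1 := by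
    calc S.card = (S.image (fun j => j.val / d)).card :=
          (Finset.card_image_of_injOn hinj).symm
      _ ≤ (Finset.range (L / d + 1)).card := by
          apply Finset.card_le_card
          intro m hm
          simp only [Finset.mem_image, Finset.mem_range] at hm ⊢
          obtain ⟨j, _, rfl⟩ := hm
          exact Nat.lt_succ_of_le (Nat.div_le_div_right (le_of_lt j.isLt))
      _ = L / d + 1 := Finset.card_range _
  have h1 : ((L / d : ℕ) : ℝ) ≤ (L : ℝ) / (d : ℝ) := Nat.cast_div_le
  have h2 : (S.card : ℝ) ≤ ((L / d + 1 : ℕ) : ℝ) := Nat.cast_le.mpr hcard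
  push_cast at h2
  linarith
end
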